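/- arXiv:1407.5908 — 4 statements merged into one kernel-verified Lean document; each statement's English description precedes it below -/
import Mathlib

section
/- Let X be a bounded real random variable with |E[X]| ≤ C/2 for some C > 0, and let X̃ = clip(X, C) := sign(X)·min(C, |X|). Then |E[X̃] - E[X]| ≤ (2/C)·Var[X]. -/
open MeasureTheory

lemma clip_eq (C x : ℝ) (hC : 0 ≤ C) :
    Real.sign x * min C |x| = max (-C) (min C x) := by
  rcases lt_trichotomy x 0 with h | h | h
  · rw [Real.sign_of_neg h, abs_of_neg h]
    rw [min_eq_right (le_of_lt (lt_of_lt_of_le h hC))]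
    rcases le_total (-x) C with h2 | h2
    · rw [min_eq_right h2, max_eq_right (by linarith)]; ring
    · rw [min_eq_left h2, max_eq_left (by linarith)]; ring
  · simp [h, hC, Real.sign_zero, max_eq_right (neg_nonpos.mpr hC)]
  · rw [Real.sign_of_pos h, abs_of_pos h, one_mul,
      max_eq_right (le_trans (neg_nonpos.mpr hC) (le_min hC h.le))]

lemma clip_diff_le (C m x : ℝ) (hC : 0 < C) (hmean : |m| ≤ C / 2) :
    |max (-C) (min C x) - x| ≤ 2 / C * (x - m) ^ 2 := by
  rcases le_or_gt (|x|) C with h | h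
  · rw [abs_le] at h
    rw [min_eq_right h.2, max_eq_right h.1, sub_self, abs_zero]
    positivity
  · have habs : |max (-C) (min C x) - x| = |x| - C := by
      rcases le_or_gt 0 x with hx | hx
      · have hxC : C < x := by rwa [abs_of_nonneg hx] at h
        rw [min_eq_left hxC.le, max_eq_right (by linarith), abs_of_nonpos (by linarith),
          abs_of_nonneg hx]; ring
      · have hxC : C < -x := by rwa [abs_of_neg hx] at h
        rw [min_eq_right (by linarith), max_eq_left (by linarith),
          abs_of_nonneg (by linarith), abs_of_neg hx]; ring
    rw [habs]
    have ht : C / 2 ≤ |x - m| := by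
      have := abs_sub_abs_le_abs_sub x m
      linarith
    have hb : |x| - C ≤ |x - m| - C / 2 := by
      have := abs_sub_abs_le_abs_sub x m
      linarith
    have ht2 : (x - m) ^ 2 = |x - m| ^ 2 := (sq_abs _).symm
    rw [ht2, div_mul_eq_mul_div, le_div_iff₀ hC]
    nlinarith [mul_nonneg (sub_nonneg.mpr ht) (abs_nonneg (x - m))]

/-- Clipping bias bound: the expectation of the clipped variable deviates from the
expectation by at most (2/C) times the variance. -/
theorem clip_bias_bound {Ω : Type*} [MeasurableSpace Ω] (μ : Measure Ω)
    [IsProbabilityMeasure μ] (X : Ω → ℝ) (C : ℝ) (hC : 0 < C)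
    (hX : MemLp X 2 μ)
    (hmean : |∫ ω, X ω ∂μ| ≤ C / 2) :
    |(∫ ω, Real.sign (X ω) * min C |X ω| ∂μ) - ∫ ω, X ω ∂μ|
      ≤ 2 / C * ProbabilityTheory.variance X μ := by
  set m := ∫ ω, X ω ∂μ with hm
  set Y : Ω → ℝ := fun ω => max (-C) (min C (X ω)) with hY
  have hclip : ∀ ω, Real.sign (X ω) * min C |X ω| = Y ω := fun ω =>
    clip_eq C (X ω) hC.le
  have hXi : Integrable X μ := hX.integrable one_le_two
  have hXm : AEStronglyMeasurable X μ := hX.aestronglyMeasurable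
  have hYm : AEStronglyMeasurable Y μ :=
    (continuous_const.max (continuous_const.min continuous_id)).comp_aestronglyMeasurable hXm
  have hYi : Integrable Y μ := by
    refine (integrable_const C).mono' hYm (ae_of_all _ fun ω => ?_)
    simp only [Real.norm_eq_abs, abs_le, hY]
    exact ⟨le_max_left _ _, max_le (by linarith) (min_le_left _ _)⟩
  have hsq : Integrable (fun ω => (X ω - m) ^ 2) μ :=
    (hX.sub (memLp_const m)).integrable_sq
  have hptw : ∀ ω, |Y ω - X ω| ≤ 2 / C * (X ω - m) ^ 2 := fun ω =>
    clip_diff_le C m (X ω) hC hmean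
  calc |(∫ ω, Real.sign (X ω) * min C |X ω| ∂μ) - m|
      = |∫ ω, (Y ω - X ω) ∂μ| := by
        rw [integral_congr_ae (ae_of_all _ hclip), integral_sub hYi hXi]
    _ ≤ ∫ ω, |Y ω - X ω| ∂μ := by
        simpa using norm_integral_le_integral_norm (f := fun ω => Y ω - X ω) (μ := μ)
    _ ≤ ∫ ω, 2 / C * (X ω - m) ^ 2 ∂μ := by
        exact integral_mono ((hYi.sub hXi).abs) (hsq.const_mul _) hptw
    _ = 2 / C * ProbabilityTheory.variance X μ := by
        rw [integral_const_mul, ProbabilityTheory.variance_eq_integral hX.aestronglyMeasurable.aemeasurable]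
end

section
/- (Key mirror descent inequality) Let W ⊆ ℝ^d be closed convex, f convex and differentiable on W, and x_{t+1} = argmin_{x ∈ W} {⟨g_t, x⟩ + (1/(2η))‖x - x_t‖²} for some η > 0 and vector g_t. Then for any x* ∈ W: ⟨g_t, x_t - x*⟩ ≤ (1/(2η))(‖x_t - x*‖² - ‖x_{t+1} - x*‖²) + (η/2)‖g_t‖². -/
open scoped InnerProductSpace

private lemma aux_nonneg_of_forall (A B : ℝ) (hB : 0 ≤ B)
    (key : ∀ l : ℝ, 0 < l → l ≤ 1 → 0 ≤ A + l * B) : 0 ≤ A := by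
  by_contra hneg
  push_neg at hneg
  have hBp : (0 : ℝ) < B + 1 := by linarith
  have hl0 : 0 < min 1 (-A / (B + 1)) :=
    lt_min one_pos (div_pos (by linarith) hBp)
  have h := key _ hl0 (min_le_left _ _)
  have hlB : min 1 (-A / (B + 1)) * B ≤ (-A / (B + 1)) * B :=
    mul_le_mul_of_nonneg_right (min_le_right _ _) hB
  have hlt : (-A / (B + 1)) * B < -A := by
    rw [div_mul_eq_mul_div, div_lt_iff₀ hBp]
    nlinarith
  linarith

/-- The key one-step inequality of (stochastic) mirror/gradient descent with Euclidean prox. -/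
theorem mirror_descent_key_inequality {d : ℕ}
    (W : Set (EuclideanSpace ℝ (Fin d))) (hW : Convex ℝ W) (hclosed : IsClosed W)
    (η : ℝ) (hη : 0 < η) (g xt xnext : EuclideanSpace ℝ (Fin d))
    (hxt : xt ∈ W) (hmem : xnext ∈ W)
    (hmin : ∀ y ∈ W, ⟪g, xnext⟫_ℝ + 1 / (2 * η) * ‖xnext - xt‖ ^ 2
        ≤ ⟪g, y⟫_ℝ + 1 / (2 * η) * ‖y - xt‖ ^ 2) :
    ∀ xstar ∈ W, ⟪g, xt - xstar⟫_ℝ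
      ≤ 1 / (2 * η) * (‖xt - xstar‖ ^ 2 - ‖xnext - xstar‖ ^ 2) + η / 2 * ‖g‖ ^ 2 := by
  intro xstar hxstar
  -- variational inequality for the minimizer
  have hVI : 0 ≤ ⟪g, xstar - xnext⟫_ℝ + 1 / η * ⟪xnext - xt, xstar - xnext⟫_ℝ := by
    apply aux_nonneg_of_forall _ (1 / (2 * η) * ‖xstar - xnext‖ ^ 2) (by positivity)
    intro l hl hl1
    have hy : xnext + l • (xstar - xnext) ∈ W := by
      have h := hW hmem hxstar (by linarith : (0:ℝ) ≤ 1 - l) hl.le (by ring)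
      have heq : (1 - l) • xnext + l • xstar = xnext + l • (xstar - xnext) := by
        simp [smul_sub, sub_smul, one_smul]; abel
      rwa [heq] at h
    have h := hmin _ hy
    have h1 : ⟪g, xnext + l • (xstar - xnext)⟫_ℝ
        = ⟪g, xnext⟫_ℝ + l * ⟪g, xstar - xnext⟫_ℝ := by
      rw [inner_add_right, real_inner_smul_right]
    have h2 : ‖xnext + l • (xstar - xnext) - xt‖ ^ 2
        = ‖xnext - xt‖ ^ 2 + 2 * (l * ⟪xnext - xt, xstar - xnext⟫_ℝ)
          + l ^ 2 * ‖xstar - xnext‖ ^ 2 := by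
      have heq : xnext + l • (xstar - xnext) - xt = (xnext - xt) + l • (xstar - xnext) := by
        abel
      rw [heq, @norm_add_sq_real, real_inner_smul_right, norm_smul]
      simp [abs_of_pos hl]
      ring
    rw [h1, h2] at h
    have h' : 0 ≤ l * ⟪g, xstar - xnext⟫_ℝ + l * (1 / η) * ⟪xnext - xt, xstar - xnext⟫_ℝ
        + l ^ 2 * (1 / (2 * η) * ‖xstar - xnext‖ ^ 2) := by
      have hc : l * (1 / η) * ⟪xnext - xt, xstar - xnext⟫_ℝ
          = 1 / (2 * η) * (2 * (l * ⟪xnext - xt, xstar - xnext⟫_ℝ)) := by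
        field_simp
      rw [hc]
      nlinarith [h]
    have hexpand : l * (⟪g, xstar - xnext⟫_ℝ + 1 / η * ⟪xnext - xt, xstar - xnext⟫_ℝ
        + l * (1 / (2 * η) * ‖xstar - xnext‖ ^ 2))
        = l * ⟪g, xstar - xnext⟫_ℝ + l * (1 / η) * ⟪xnext - xt, xstar - xnext⟫_ℝ
        + l ^ 2 * (1 / (2 * η) * ‖xstar - xnext‖ ^ 2) := by ring
    have h'' : 0 ≤ l * (⟪g, xstar - xnext⟫_ℝ + 1 / η * ⟪xnext - xt, xstar - xnext⟫_ℝ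
        + l * (1 / (2 * η) * ‖xstar - xnext‖ ^ 2)) := by rw [hexpand]; exact h'
    nlinarith [h'', hl, mul_pos hl hl]
  -- rewrite the variational inequality
  have hneg1 : ⟪g, xstar - xnext⟫_ℝ = -⟪g, xnext - xstar⟫_ℝ := by
    rw [show xstar - xnext = -(xnext - xstar) from by abel, inner_neg_right]
  have hneg2 : ⟪xnext - xt, xstar - xnext⟫_ℝ = ⟪xt - xnext, xnext - xstar⟫_ℝ := by
    rw [show xstar - xnext = -(xnext - xstar) from by abel,
      show xnext - xt = -(xt - xnext) from by abel, inner_neg_neg]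
  rw [hneg1, hneg2] at hVI
  -- three point identity
  have h3 : ‖xt - xstar‖ ^ 2 = ‖xt - xnext‖ ^ 2 + 2 * ⟪xt - xnext, xnext - xstar⟫_ℝ
      + ‖xnext - xstar‖ ^ 2 := by
    rw [show xt - xstar = (xt - xnext) + (xnext - xstar) from by abel, @norm_add_sq_real]
  -- Young's inequality
  have hyoung : ⟪g, xt - xnext⟫_ℝ ≤ η / 2 * ‖g‖ ^ 2 + 1 / (2 * η) * ‖xt - xnext‖ ^ 2 := by
    have h1 := real_inner_le_norm g (xt - xnext)
    have h2 : ‖g‖ * ‖xt - xnext‖ ≤ η / 2 * ‖g‖ ^ 2 + 1 / (2 * η) * ‖xt - xnext‖ ^ 2 := by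
      rw [← sub_nonneg]
      have : η / 2 * ‖g‖ ^ 2 + 1 / (2 * η) * ‖xt - xnext‖ ^ 2 - ‖g‖ * ‖xt - xnext‖
          = 1 / (2 * η) * (η * ‖g‖ - ‖xt - xnext‖) ^ 2 := by
        field_simp; ring
      rw [this]; positivity
    linarith
  -- split the inner product
  have hsplit : ⟪g, xt - xstar⟫_ℝ = ⟪g, xt - xnext⟫_ℝ + ⟪g, xnext - xstar⟫_ℝ := by
    rw [← inner_add_right]
    congr 1
    abel
  -- combine
  have hc : 1 / (2 * η) * (‖xt - xnext‖ ^ 2 + 2 * ⟪xt - xnext, xnext - xstar⟫_ℝ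
      + ‖xnext - xstar‖ ^ 2 - ‖xnext - xstar‖ ^ 2)
      = 1 / (2 * η) * ‖xt - xnext‖ ^ 2 + 1 / η * ⟪xt - xnext, xnext - xstar⟫_ℝ := by
    field_simp; ring
  rw [hsplit, h3, hc]
  linarith
end

section
/- Let f: W → ℝ be convex and differentiable on a convex set W ⊆ ℝ^d, let g_1, ..., g_T ∈ ℝ^d and define iterates x_1 ∈ W, x_{t+1} = Π_W(x_t - η g_t). Then for any x ∈ W: ∑_{t=1}^T ⟨g_t, x_t - x⟩ ≤ ‖x₁ - x‖²/(2η) + (η/2)∑_{t=1}^T ‖g_t‖². In particular, if g_t = ∇f_t(x_t) for convex functions f_t with ‖∇f_t(x_t)‖ ≤uret G and ‖x₁ - x‖ ≤ R, setting η = R/(G√T) gives regret ∑_t (f_t(x_t) - f_t(x)) ≤ RG√T. -/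
open scoped InnerProductSpace
open Finset

set_option maxHeartbeats 1000000

/-- Gradient inequality for convex functions. -/
lemma ogd_grad_ineq {d : ℕ} {W : Set (EuclideanSpace ℝ (Fin d))}
    {f : EuclideanSpace ℝ (Fin d) → ℝ} (hf : ConvexOn ℝ W f)
    {a b : EuclideanSpace ℝ (Fin d)} (ha : a ∈ W) (hb : b ∈ W)
    (hd : DifferentiableAt ℝ f a) :
    ⟪gradient f a, b - a⟫_ℝ ≤ f b - f a := by
  have key : ⟪gradient f a, b - a⟫_ℝ = fderiv ℝ f a (b - a) := by
    rw [gradient]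
    exact InnerProductSpace.toDual_symm_apply
  set φ : ℝ → ℝ := fun s => f (a + s • (b - a)) with hφdef
  have h1 : HasDerivAt (fun s : ℝ => a + s • (b - a)) (b - a) 0 := by
    simpa using ((hasDerivAt_id (0:ℝ)).smul_const (b - a)).const_add a
  have hfd : HasFDerivAt f (fderiv ℝ f a) ((fun s : ℝ => a + s • (b - a)) 0) := by
    simpa using hd.hasFDerivAt
  have h2 : HasDerivAt φ (fderiv ℝ f a (b - a)) 0 := hfd.comp_hasDerivAt 0 h1
  have h3 : Filter.Tendsto (slope φ 0) (nhdsWithin 0 (Set.Ioi 0))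
      (nhds (fderiv ℝ f a (b - a))) :=
    (hasDerivAt_iff_tendsto_slope.mp h2).mono_left
      (nhdsWithin_mono 0 (fun s hs => ne_of_gt hs))
  have hev : ∀ᶠ s in nhdsWithin 0 (Set.Ioi (0:ℝ)), slope φ 0 s ≤ f b - f a := by
    filter_upwards [Ioo_mem_nhdsGT_of_mem (Set.left_mem_Ico.mpr one_pos)] with s hs
    obtain ⟨hs0, hs1⟩ := hs
    have hcomb : a + s • (b - a) = s • b + (1 - s) • a := by
      rw [smul_sub, sub_smul, one_smul]; abel
    have hfle : f (a + s • (b - a)) ≤ s * f b + (1 - s) * f a := by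
      rw [hcomb]
      exact hf.2 hb ha (le_of_lt hs0) (by linarith) (by ring)
    have hφ0 : φ 0 = f a := by simp [hφdef]
    rw [slope_def_field, hφ0]
    rw [div_le_iff₀ (by simpa using hs0)] at *
    simp only [hφdef]
    nlinarith
  have := le_of_tendsto h3 hev
  rw [key]; exact this

lemma ogd_tele (a : ℕ → ℝ) (n : ℕ) :
    ∑ t ∈ Finset.Icc 1 n, (a t - a (t + 1)) = a 1 - a (n + 1) := by
  induction n with
  | zero => simp
  | succ n ih =>
    rw [Finset.sum_Icc_succ_top (Nat.le_add_left 1 n), ih]; ring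

/-- Regret bound of online (projected) gradient descent: the general inequality for any
step size, and the RG√T regret bound for the tuned step size η = R/(G√T). -/
theorem ogd_regret {d T : ℕ} (hT : 1 ≤ T)
    (W : Set (EuclideanSpace ℝ (Fin d))) (hW : Convex ℝ W) (hclosed : IsClosed W)
    (f : ℕ → EuclideanSpace ℝ (Fin d) → ℝ)
    (g x : ℕ → EuclideanSpace ℝ (Fin d))
    (η G R : ℝ) (hη : 0 < η) (hG : 0 < G) (hR : 0 < R)
    (hx1 : x 1 ∈ W)
    (hmemW : ∀ t, x (t + 1) ∈ W)
    (hproj : ∀ t, 1 ≤ t → ∀ y ∈ W,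
        ‖x (t + 1) - (x t - η • g t)‖ ≤ ‖y - (x t - η • g t)‖)
    (hconv : ∀ t, ConvexOn ℝ W (f t))
    (hdiff : ∀ t, ∀ w ∈ W, DifferentiableAt ℝ (f t) w)
    (hgrad : ∀ t, g t = gradient (f t) (x t))
    (hGbound : ∀ t, 1 ≤ t → t ≤ T → ‖g t‖ ≤ G)
    (xstar : EuclideanSpace ℝ (Fin d)) (hxs : xstar ∈ W)
    (hRbound : ‖x 1 - xstar‖ ≤ R) :
    (∑ t ∈ Finset.Icc 1 T, ⟪g t, x t - xstar⟫_ℝ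
        ≤ ‖x 1 - xstar‖ ^ 2 / (2 * η) + η / 2 * ∑ t ∈ Finset.Icc 1 T, ‖g t‖ ^ 2) ∧
    (η = R / (G * Real.sqrt T) →
      ∑ t ∈ Finset.Icc 1 T, (f t (x t) - f t xstar) ≤ R * G * Real.sqrt T) := by
  set a : ℕ → ℝ := fun t => ‖x t - xstar‖ ^ 2 with ha
  -- membership of iterates
  have hmem : ∀ t, 1 ≤ t → x t ∈ W := by
    intro t ht
    rcases Nat.exists_eq_add_of_le ht with ⟨s, rfl⟩
    cases s with
    | zero => exact hx1
    | succ n => simpa [Nat.add_comm] using hmemW (n + 1)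
  -- per-step inequality
  have key : ∀ t, 1 ≤ t →
      ⟪g t, x t - xstar⟫_ℝ ≤ (a t - a (t + 1)) / (2 * η) + η / 2 * ‖g t‖ ^ 2 := by
    intro t ht
    set u := x t - η • g t with hu
    set v := x (t + 1) with hv
    have hvW : v ∈ W := hmemW t
    have hmin : ‖u - v‖ = ⨅ w : W, ‖u - w‖ := by
      haveI : Nonempty W := ⟨⟨v, hvW⟩⟩
      apply le_antisymm
      · apply le_ciInf
        intro w
        rw [norm_sub_rev, norm_sub_rev u]
        exact hproj t ht w w.2
      · apply ciInf_le _ (⟨v, hvW⟩ : W)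
        refine ⟨0, fun r hr => ?_⟩
        obtain ⟨w, rfl⟩ := hr
        exact norm_nonneg _
    have hvar : ⟪u - v, xstar - v⟫_ℝ ≤ 0 :=
      ((norm_eq_iInf_iff_real_inner_le_zero hW hvW).mp hmin) xstar hxs
    have hsq : ‖v - xstar‖ ^ 2 ≤ ‖u - xstar‖ ^ 2 := by
      have hexp : ‖u - xstar‖ ^ 2
          = ‖u - v‖ ^ 2 + 2 * ⟪u - v, v - xstar⟫_ℝ + ‖v - xstar‖ ^ 2 := by
        have := norm_add_sq_real (u - v) (v - xstar)
        simpa [sub_add_sub_cancel] using this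
      have : ⟪u - v, v - xstar⟫_ℝ ≥ 0 := by
        have := inner_sub_right (𝕜 := ℝ) (u - v) xstar v
        have h2 := inner_sub_right (𝕜 := ℝ) (u - v) v xstar
        nlinarith [hvar, inner_sub_right (𝕜 := ℝ) (u - v) xstar v,
          real_inner_self_nonneg (x := u - v)]
      nlinarith [sq_nonneg ‖u - v‖]
    have hexp2 : ‖u - xstar‖ ^ 2
        = a t - 2 * η * ⟪g t, x t - xstar⟫_ℝ + η ^ 2 * ‖g t‖ ^ 2 := by
      have : u - xstar = (x t - xstar) - η • g t := by rw [hu]; abel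
      rw [this, norm_sub_sq_real, real_inner_smul_right, norm_smul, real_inner_comm]
      simp [ha, abs_of_pos hη, mul_pow]
      ring
    have h2η : (0:ℝ) < 2 * η := by linarith
    have hmain : 2 * η * ⟪g t, x t - xstar⟫_ℝ ≤ a t - a (t + 1) + η ^ 2 * ‖g t‖ ^ 2 := by
      have : a (t + 1) = ‖v - xstar‖ ^ 2 := rfl
      nlinarith [hsq]
    have : ⟪g t, x t - xstar⟫_ℝ ≤ (a t - a (t + 1) + η ^ 2 * ‖g t‖ ^ 2) / (2 * η) := by
      rw [le_div_iff₀ h2η]; linarith [hmain]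
    have heq : (a t - a (t + 1) + η ^ 2 * ‖g t‖ ^ 2) / (2 * η)
        = (a t - a (t + 1)) / (2 * η) + η / 2 * ‖g t‖ ^ 2 := by
      field_simp
    linarith [this, heq ▸ this]
  -- summed inequality
  have part1 : ∑ t ∈ Finset.Icc 1 T, ⟪g t, x t - xstar⟫_ℝ
      ≤ a 1 / (2 * η) + η / 2 * ∑ t ∈ Finset.Icc 1 T, ‖g t‖ ^ 2 := by
    calc ∑ t ∈ Finset.Icc 1 T, ⟪g t, x t - xstar⟫_ℝ
        ≤ ∑ t ∈ Finset.Icc 1 T, ((a t - a (t + 1)) / (2 * η) + η / 2 * ‖g t‖ ^ 2) := by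
          apply Finset.sum_le_sum
          intro t htmem
          exact key t (Finset.mem_Icc.mp htmem).1
      _ = (a 1 - a (T + 1)) / (2 * η) + η / 2 * ∑ t ∈ Finset.Icc 1 T, ‖g t‖ ^ 2 := by
          rw [Finset.sum_add_distrib, ← Finset.sum_div, ogd_tele, Finset.mul_sum]
      _ ≤ a 1 / (2 * η) + η / 2 * ∑ t ∈ Finset.Icc 1 T, ‖g t‖ ^ 2 := by
          have : a (T + 1) ≥ 0 := sq_nonneg _
          have h2η : (0:ℝ) < 2 * η := by linarith
          gcongr
          linarith
  refine ⟨part1, ?_⟩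
  intro hηval
  have hsT : (0:ℝ) < Real.sqrt T := Real.sqrt_pos.mpr (by exact_mod_cast hT)
  have hsT2 : (Real.sqrt T) ^ 2 = T := Real.sq_sqrt (by positivity)
  -- bound on sum of squared gradient norms
  have hsum : ∑ t ∈ Finset.Icc 1 T, ‖g t‖ ^ 2 ≤ T * G ^ 2 := by
    calc ∑ t ∈ Finset.Icc 1 T, ‖g t‖ ^ 2 ≤ ∑ t ∈ Finset.Icc 1 T, G ^ 2 := by
          apply Finset.sum_le_sum
          intro t htmem
          obtain ⟨h1, h2⟩ := Finset.mem_Icc.mp htmem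
          exact pow_le_pow_left₀ (norm_nonneg _) (hGbound t h1 h2) 2
      _ = T * G ^ 2 := by rw [Finset.sum_const, Nat.card_Icc]; simp [nsmul_eq_mul]
  have hregret : ∑ t ∈ Finset.Icc 1 T, (f t (x t) - f t xstar)
      ≤ ∑ t ∈ Finset.Icc 1 T, ⟪g t, x t - xstar⟫_ℝ := by
    apply Finset.sum_le_sum
    intro t htmem
    obtain ⟨h1, _⟩ := Finset.mem_Icc.mp htmem
    have := ogd_grad_ineq (hconv t) (hmem t h1) hxs (hdiff t (x t) (hmem t h1))
    rw [hgrad t, real_inner_comm] at *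
    have h2 : ⟪gradient (f t) (x t), x t - xstar⟫_ℝ
        = - ⟪gradient (f t) (x t), xstar - x t⟫_ℝ := by
      rw [← inner_neg_right]; congr 1; abel
    rw [real_inner_comm] at h2
    linarith [ogd_grad_ineq (hconv t) (hmem t h1) hxs (hdiff t (x t) (hmem t h1)), h2]
  have ha1 : a 1 ≤ R ^ 2 := by
    rw [ha]
    exact pow_le_pow_left₀ (norm_nonneg _) hRbound 2
  have hηpos := hη
  have hfinal : a 1 / (2 * η) + η / 2 * ∑ t ∈ Finset.Icc 1 T, ‖g t‖ ^ 2
      ≤ R * G * Real.sqrt T := by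
    have h1 : a 1 / (2 * η) ≤ R ^ 2 / (2 * η) := by gcongr
    have h2 : η / 2 * ∑ t ∈ Finset.Icc 1 T, ‖g t‖ ^ 2 ≤ η / 2 * (T * G ^ 2) := by
      gcongr
    have heq : R ^ 2 / (2 * η) + η / 2 * (T * G ^ 2) = R * G * Real.sqrt T := by
      set s := Real.sqrt T with hs
      rw [hηval, ← hsT2]
      field_simp
      ring
    linarith
  linarith [part1, hregret, hfinal]
end

section
/- (Extragradient/Prox lemma) Let Φ be α-strongly convex w.r.t. a norm ‖·‖ with dual norm ‖·‖_*, B the induced Bregman divergence, U a closed convex set, z ∈ U, γ > 0, and define x = argmin_{u ∈ U} γ⟨u, ξ⟩ + B(u, z) and z₊ = argmin_{u ∈ U} γ⟨u, ζ⟩ + B(u, z). Then for any u ∈ U: γ⟨ζ, x - u⟩ ≤ B(u, z) - B(u, z₊) + (γ²/α)‖ξ - ζ‖_*² - (α/2)[‖x - z‖² + ‖x - z₊‖²]. -/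
open scoped InnerProductSpace

open Set

section Aux

variable {E : Type*} [NormedAddCommGroup E] [InnerProductSpace ℝ E]

/-- Directional derivative is nonneg at a point minimizing over a right segment. -/
lemma aux_dir_nonneg {f : E → ℝ} {L : E →L[ℝ] ℝ} {p w : E}
    (hf : HasFDerivAt f L p)
    (hmin : ∀ t : ℝ, t ∈ Set.Ioc (0:ℝ) 1 → f p ≤ f (p + t • w)) :
    0 ≤ L w := by
  have hline : HasDerivAt (fun t : ℝ => p + t • w) w 0 := by
    simpa using ((hasDerivAt_id (0:ℝ)).smul_const w).const_add p
  have hg : HasDerivAt (fun t : ℝ => f (p + t • w)) (L w) 0 := by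
    have h0 : HasFDerivAt f L ((fun t : ℝ => p + t • w) 0) := by simpa using hf
    exact h0.comp_hasDerivAt 0 hline
  have hs : Filter.Tendsto (slope (fun t : ℝ => f (p + t • w)) 0) (nhdsWithin 0 (Set.Ioi 0))
      (nhds (L w)) :=
    (hasDerivAt_iff_tendsto_slope.mp hg).mono_left
      (nhdsWithin_mono _ (fun t ht => ne_of_gt ht))
  refine ge_of_tendsto hs ?_
  filter_upwards [Ioc_mem_nhdsGT_of_mem (Set.mem_Ico.mpr ⟨le_rfl, one_pos⟩)] with t ht
  rw [slope_def_field]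
  have h1 : f p ≤ f (p + t • w) := hmin t ht
  have h2 : (0:ℝ) < t - 0 := by simpa using ht.1
  exact div_nonneg (by simpa using sub_nonneg.mpr h1) h2.le

/-- Variational inequality from minimality over a convex set. -/
lemma aux_VI {U : Set E} (hU : Convex ℝ U) {f : E → ℝ} {L : E →L[ℝ] ℝ} {p : E} (hp : p ∈ U)
    (hf : HasFDerivAt f L p) (hmin : ∀ u ∈ U, f p ≤ f u) :
    ∀ u ∈ U, 0 ≤ L (u - p) := by
  intro u hu
  apply aux_dir_nonneg hf
  intro t ht
  have hmem : (1 - t) • p + t • u ∈ U :=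
    hU hp hu (by linarith [ht.2]) ht.1.le (by ring)
  have : p + t • (u - p) = (1 - t) • p + t • u := by module
  rw [this]
  exact hmin _ hmem

end Aux


section Aux3

variable {d : ℕ} {N : EuclideanSpace ℝ (Fin d) → ℝ}


variable {d : ℕ} {N : EuclideanSpace ℝ (Fin d) → ℝ}

lemma aux_N_sum {ι : Type*} (hN0 : N 0 = 0)
    (hNtri : ∀ x y, N (x + y) ≤ N x + N y)
    (s : Finset ι) (f : ι → EuclideanSpace ℝ (Fin d)) :
    N (∑ i ∈ s, f i) ≤ ∑ i ∈ s, N (f i) := by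
  classical
  induction s using Finset.cons_induction with
  | empty => simp [hN0]
  | cons i s hi ih =>
    rw [Finset.sum_cons, Finset.sum_cons]
    exact le_trans (hNtri _ _) (by linarith)

lemma aux_N_upper (hNzero : ∀ x, N x = 0 ↔ x = 0) (hN0 : ∀ x, 0 ≤ N x)
    (hNtri : ∀ x y, N (x + y) ≤ N x + N y)
    (hNsmul : ∀ (c : ℝ) x, N (c • x) = |c| * N x) :
    ∃ C : ℝ, ∀ x, N x ≤ C * ‖x‖ := by
  classical
  refine ⟨∑ i : Fin d, N (EuclideanSpace.single i 1), fun x => ?_⟩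
  have hx : x = ∑ i : Fin d, x i • EuclideanSpace.single i (1:ℝ) := by
    ext j
    rw [WithLp.ofLp_sum, Finset.sum_apply]
    simp [EuclideanSpace.single_apply]
  calc N x = N (∑ i : Fin d, x i • EuclideanSpace.single i (1:ℝ)) := by rw [← hx]
    _ ≤ ∑ i : Fin d, N (x i • EuclideanSpace.single i (1:ℝ)) :=
        aux_N_sum ((hNzero 0).mpr rfl) hNtri _ _
    _ = ∑ i : Fin d, |x i| * N (EuclideanSpace.single i (1:ℝ)) := by
        simp [hNsmul]
    _ ≤ ∑ i : Fin d, ‖x‖ * N (EuclideanSpace.single i (1:ℝ)) := by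
        refine Finset.sum_le_sum fun i _ => ?_
        have h1 : |x i| ≤ ‖x‖ := by
          rw [EuclideanSpace.norm_eq]
          refine Real.abs_le_sqrt ?_
          have : |x i| ^ 2 ≤ ∑ j : Fin d, ‖x j‖ ^ 2 := by
            refine Finset.single_le_sum (f := fun j => ‖x j‖ ^ 2)
              (fun j _ => by positivity) (Finset.mem_univ i) |>.trans_eq' ?_
            simp [sq_abs]
          simpa using this
        exact mul_le_mul_of_nonneg_right h1 (hN0 _)
    _ = _ := by rw [← Finset.mul_sum, mul_comm]



lemma aux_N_lower (hN0 : ∀ x, 0 ≤ N x) (hNzero : ∀ x, N x = 0 ↔ x = 0)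
    (hNtri : ∀ x y, N (x + y) ≤ N x + N y)
    (hNsmul : ∀ (c : ℝ) x, N (c • x) = |c| * N x) :
    ∃ c : ℝ, 0 < c ∧ ∀ x, c * ‖x‖ ≤ N x := by
  by_cases hne : ∃ x : EuclideanSpace ℝ (Fin d), x ≠ 0
  · obtain ⟨x₀, hx₀⟩ := hne
    -- N is continuous
    obtain ⟨C, hC⟩ := aux_N_upper hNzero hN0 hNtri hNsmul
    have hlip : ∀ p q : EuclideanSpace ℝ (Fin d), N p - N q ≤ C * ‖p - q‖ := by
      intro p q
      have := hNtri q (p - q)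
      simp only [add_sub_cancel] at this
      linarith [hC (p - q)]
    have hcont : Continuous N := by
      rw [Metric.continuous_iff]
      intro p ε hε
      have hC0 : 0 ≤ C := by
        have := (hN0 x₀).trans (hC x₀)
        have hx0 : 0 < ‖x₀‖ := norm_pos_iff.mpr hx₀
        nlinarith
      refine ⟨ε / (C + 1), by positivity, fun q hq => ?_⟩
      rw [Real.dist_eq, abs_lt]
      have hd : ‖q - p‖ < ε / (C + 1) := by rwa [dist_eq_norm] at hq
      have hd' : ‖p - q‖ < ε / (C + 1) := by rwa [norm_sub_rev] at hd
      have h1 := hlip q p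
      have h2 := hlip p q
      have : C * ‖q - p‖ < ε := by
        calc C * ‖q - p‖ ≤ (C + 1) * ‖q - p‖ := by nlinarith [norm_nonneg (q - p)]
          _ < (C + 1) * (ε / (C + 1)) := by
              exact mul_lt_mul_of_pos_left hd (by linarith)
          _ = ε := by field_simp
      constructor <;> nlinarith [norm_sub_rev p q ▸ this]
    -- minimize N on the unit sphere
    have hsph : (Metric.sphere (0 : EuclideanSpace ℝ (Fin d)) 1).Nonempty := by
      refine ⟨‖x₀‖⁻¹ • x₀, ?_⟩
      simp [norm_smul, norm_pos_iff.mpr hx₀, inv_mul_cancel₀ (norm_ne_zero_iff.mpr hx₀)]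
    obtain ⟨m, hm, hmin'⟩ := (isCompact_sphere (0 : EuclideanSpace ℝ (Fin d)) 1).exists_isMinOn
      hsph hcont.continuousOn
    have hmin : ∀ w ∈ Metric.sphere (0 : EuclideanSpace ℝ (Fin d)) 1, N m ≤ N w :=
      fun w hw => hmin' hw
    have hm1 : ‖m‖ = 1 := by simpa using hm
    have hmne : m ≠ 0 := by intro h; rw [h] at hm1; simp at hm1
    have hc : 0 < N m := lt_of_le_of_ne (hN0 m) (fun h => hmne ((hNzero m).mp h.symm))
    refine ⟨N m, hc, fun x => ?_⟩
    by_cases hx : x = 0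
    · simp [hx, (hNzero 0).mpr rfl]
    · have hnx : 0 < ‖x‖ := norm_pos_iff.mpr hx
      have hu : ‖x‖⁻¹ • x ∈ Metric.sphere (0 : EuclideanSpace ℝ (Fin d)) 1 := by
        simp [norm_smul, hnx, inv_mul_cancel₀ hnx.ne']
      have := hmin _ hu
      have hNx : N x = ‖x‖ * N (‖x‖⁻¹ • x) := by
        calc N x = N (‖x‖ • (‖x‖⁻¹ • x)) := by
              rw [smul_smul, mul_inv_cancel₀ hnx.ne', one_smul]
          _ = |‖x‖| * N (‖x‖⁻¹ • x) := hNsmul _ _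
          _ = ‖x‖ * N (‖x‖⁻¹ • x) := by rw [abs_of_pos hnx]
      rw [hNx, mul_comm (N m)]
      exact mul_le_mul_of_nonneg_left this hnx.le
  · push_neg at hne
    exact ⟨1, one_pos, fun x => by simp [hne x, (hNzero 0).mpr rfl]⟩

lemma aux_duality {Nstar : EuclideanSpace ℝ (Fin d) → ℝ}
    (hN0 : ∀ x, 0 ≤ N x) (hNzero : ∀ x, N x = 0 ↔ x = 0)
    (hNtri : ∀ x y, N (x + y) ≤ N x + N y)
    (hNsmul : ∀ (c : ℝ) x, N (c • x) = |c| * N x)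
    (hNstar : ∀ y, Nstar y = sSup ((fun x => ⟪y, x⟫_ℝ) '' {x | N x ≤ 1}))
    (y v : EuclideanSpace ℝ (Fin d)) :
    ⟪y, v⟫_ℝ ≤ Nstar y * N v := by
  obtain ⟨c, hc, hcle⟩ := aux_N_lower hN0 hNzero hNtri hNsmul
  have hbdd : BddAbove ((fun x => ⟪y, x⟫_ℝ) '' {x | N x ≤ 1}) := by
    refine ⟨‖y‖ * c⁻¹, ?_⟩
    rintro r ⟨w, hw, rfl⟩
    have h1 : ‖w‖ ≤ c⁻¹ := by
      have h2 : N w ≤ 1 := hw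
      have h3 := hcle w
      have h4 : ‖w‖ ≤ c⁻¹ * 1 := (le_inv_mul_iff₀ hc).mpr (h3.trans h2)
      simpa using h4
    calc ⟪y, w⟫_ℝ ≤ ‖y‖ * ‖w‖ := real_inner_le_norm y w
      _ ≤ ‖y‖ * c⁻¹ := mul_le_mul_of_nonneg_left h1 (norm_nonneg y)
  by_cases hv : v = 0
  · simp [hv, (hNzero 0).mpr rfl]
  · have hNv : 0 < N v :=
      lt_of_le_of_ne (hN0 v) (fun h => hv ((hNzero v).mp h.symm))
    have hmem : (N v)⁻¹ * ⟪y, v⟫_ℝ ∈ (fun x => ⟪y, x⟫_ℝ) '' {x | N x ≤ 1} := by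
      refine ⟨(N v)⁻¹ • v, ?_, by show ⟪y, (N v)⁻¹ • v⟫_ℝ = _; rw [real_inner_smul_right]⟩
      simp only [Set.mem_setOf_eq, hNsmul, abs_inv, abs_of_pos hNv]
      rw [inv_mul_cancel₀ hNv.ne']
    have hle : (N v)⁻¹ * ⟪y, v⟫_ℝ ≤ Nstar y := by
      rw [hNstar]; exact le_csSup hbdd hmem
    calc ⟪y, v⟫_ℝ = N v * ((N v)⁻¹ * ⟪y, v⟫_ℝ) := by
          field_simp
      _ ≤ N v * Nstar y := mul_le_mul_of_nonneg_left hle hNv.le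
      _ = Nstar y * N v := mul_comm _ _

end Aux3

set_option maxHeartbeats 1000000 in
/-- Extragradient (mirror prox) lemma: two prox steps from the same point with
gradients ξ and ζ, for a prox function Φ that is α-strongly convex with respect
to a general norm N with dual norm Nstar. -/
theorem extragradient_lemma {d : ℕ}
    (K U : Set (EuclideanSpace ℝ (Fin d)))
    (hKconv : Convex ℝ K) (hKcomp : IsCompact K)
    (hUK : U ⊆ K) (hUconv : Convex ℝ U) (hUclosed : IsClosed U)
    (N Nstar : EuclideanSpace ℝ (Fin d) → ℝ) (α : ℝ) (hα : 0 < α)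
    (hN0 : ∀ x, 0 ≤ N x) (hNzero : ∀ x, N x = 0 ↔ x = 0)
    (hNtri : ∀ x y, N (x + y) ≤ N x + N y)
    (hNsmul : ∀ (c : ℝ) (x : EuclideanSpace ℝ (Fin d)), N (c • x) = |c| * N x)
    (hNstar : ∀ y, Nstar y = sSup ((fun x => ⟪y, x⟫_ℝ) '' {x | N x ≤ 1}))
    (Φ : EuclideanSpace ℝ (Fin d) → ℝ)
    (hΦdiff : ∀ x ∈ K, DifferentiableAt ℝ Φ x)
    (hΦsc : ∀ x ∈ K, ∀ y ∈ K,
      Φ x ≥ Φ y + ⟪gradient Φ y, x - y⟫_ℝ + α / 2 * N (x - y) ^ 2)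
    (B : EuclideanSpace ℝ (Fin d) → EuclideanSpace ℝ (Fin d) → ℝ)
    (hB : ∀ x z, B x z = Φ x - Φ z - ⟪gradient Φ z, x - z⟫_ℝ)
    (γ : ℝ) (hγ : 0 < γ)
    (ξ ζ z x zp : EuclideanSpace ℝ (Fin d))
    (hz : z ∈ U) (hx : x ∈ U) (hzp : zp ∈ U)
    (hxmin : ∀ u ∈ U, γ * ⟪x, ξ⟫_ℝ + B x z ≤ γ * ⟪u, ξ⟫_ℝ + B u z)
    (hzpmin : ∀ u ∈ U, γ * ⟪zp, ζ⟫_ℝ + B zp z ≤ γ * ⟪u, ζ⟫_ℝ + B u z) :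
    ∀ u ∈ U, γ * ⟪ζ, x - u⟫_ℝ
      ≤ B u z - B u zp + γ ^ 2 / α * Nstar (ξ - ζ) ^ 2
        - α / 2 * (N (x - z) ^ 2 + N (x - zp) ^ 2) := by
  classical
  have hxK : x ∈ K := hUK hx
  have hzK : z ∈ K := hUK hz
  have hzpK : zp ∈ K := hUK hzp
  set gz := gradient Φ z with hgz
  set gx := gradient Φ x with hgx
  set gp := gradient Φ zp with hgp
  -- linear functionals have themselves as derivative
  have hlinmap : ∀ (w p : EuclideanSpace ℝ (Fin d)),
      HasFDerivAt (fun u => ⟪u, w⟫_ℝ) (InnerProductSpace.toDual ℝ (EuclideanSpace ℝ (Fin d)) w : EuclideanSpace ℝ (Fin d) →L[ℝ] ℝ) p := by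
    intro w p
    have heq : (fun u : EuclideanSpace ℝ (Fin d) => ⟪u, w⟫_ℝ) = fun u => (InnerProductSpace.toDual ℝ (EuclideanSpace ℝ (Fin d)) w) u := by
      funext u
      rw [InnerProductSpace.toDual_apply_apply, real_inner_comm]
    rw [heq]
    exact (InnerProductSpace.toDual ℝ (EuclideanSpace ℝ (Fin d)) w : EuclideanSpace ℝ (Fin d) →L[ℝ] ℝ).hasFDerivAt
  have hlinmap' : ∀ (w p : EuclideanSpace ℝ (Fin d)),
      HasFDerivAt (fun u => ⟪w, u - z⟫_ℝ) (InnerProductSpace.toDual ℝ (EuclideanSpace ℝ (Fin d)) w : EuclideanSpace ℝ (Fin d) →L[ℝ] ℝ) p := by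
    intro w p
    have heq : (fun u : EuclideanSpace ℝ (Fin d) => ⟪w, u - z⟫_ℝ)
        = fun u => (InnerProductSpace.toDual ℝ (EuclideanSpace ℝ (Fin d)) w) u - ⟪w, z⟫_ℝ := by
      funext u
      rw [InnerProductSpace.toDual_apply_apply, inner_sub_right]
    rw [heq]
    exact (InnerProductSpace.toDual ℝ (EuclideanSpace ℝ (Fin d)) w : EuclideanSpace ℝ (Fin d) →L[ℝ] ℝ).hasFDerivAt.sub_const _
  have hgrad : ∀ p ∈ K, HasFDerivAt Φ (InnerProductSpace.toDual ℝ (EuclideanSpace ℝ (Fin d)) (gradient Φ p) : EuclideanSpace ℝ (Fin d) →L[ℝ] ℝ) p :=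
    fun p hp => ((hΦdiff p hp).hasGradientAt).hasFDerivAt
  -- variational inequality for x
  have hF1 : HasFDerivAt (fun u : EuclideanSpace ℝ (Fin d) => γ * ⟪u, ξ⟫_ℝ + (Φ u - Φ z - ⟪gz, u - z⟫_ℝ))
      (γ • (InnerProductSpace.toDual ℝ (EuclideanSpace ℝ (Fin d)) ξ : EuclideanSpace ℝ (Fin d) →L[ℝ] ℝ)
        + ((InnerProductSpace.toDual ℝ (EuclideanSpace ℝ (Fin d)) gx : EuclideanSpace ℝ (Fin d) →L[ℝ] ℝ)
          - (InnerProductSpace.toDual ℝ (EuclideanSpace ℝ (Fin d)) gz : EuclideanSpace ℝ (Fin d) →L[ℝ] ℝ))) x :=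
    ((hlinmap ξ x).const_mul γ).add (((hgrad x hxK).sub_const (Φ z)).sub (hlinmap' gz x))
  have hVIx := aux_VI hUconv hx hF1 (by
    intro u hu
    have h := hxmin u hu
    simp only [hB] at h
    exact h)
  have hVIx' : ∀ u ∈ U, 0 ≤ γ * ⟪ξ, u - x⟫_ℝ + (⟪gx, u - x⟫_ℝ - ⟪gz, u - x⟫_ℝ) := by
    intro u hu
    have h := hVIx u hu
    simpa [ContinuousLinearMap.add_apply, ContinuousLinearMap.sub_apply,
      ContinuousLinearMap.smul_apply, InnerProductSpace.toDual_apply_apply, smul_eq_mul] using h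
  -- variational inequality for zp
  have hF2 : HasFDerivAt (fun u : EuclideanSpace ℝ (Fin d) => γ * ⟪u, ζ⟫_ℝ + (Φ u - Φ z - ⟪gz, u - z⟫_ℝ))
      (γ • (InnerProductSpace.toDual ℝ (EuclideanSpace ℝ (Fin d)) ζ : EuclideanSpace ℝ (Fin d) →L[ℝ] ℝ)
        + ((InnerProductSpace.toDual ℝ (EuclideanSpace ℝ (Fin d)) gp : EuclideanSpace ℝ (Fin d) →L[ℝ] ℝ)
          - (InnerProductSpace.toDual ℝ (EuclideanSpace ℝ (Fin d)) gz : EuclideanSpace ℝ (Fin d) →L[ℝ] ℝ))) zp :=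
    ((hlinmap ζ zp).const_mul γ).add (((hgrad zp hzpK).sub_const (Φ z)).sub (hlinmap' gz zp))
  have hVIp := aux_VI hUconv hzp hF2 (by
    intro u hu
    have h := hzpmin u hu
    simp only [hB] at h
    exact h)
  have hVIp' : ∀ u ∈ U, 0 ≤ γ * ⟪ζ, u - zp⟫_ℝ + (⟪gp, u - zp⟫_ℝ - ⟪gz, u - zp⟫_ℝ) := by
    intro u hu
    have h := hVIp u hu
    simpa [ContinuousLinearMap.add_apply, ContinuousLinearMap.sub_apply,
      ContinuousLinearMap.smul_apply, InnerProductSpace.toDual_apply_apply, smul_eq_mul] using h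
  -- symmetry of N under negation
  have hsym : ∀ v w : EuclideanSpace ℝ (Fin d), N (v - w) = N (w - v) := by
    intro v w
    have h := hNsmul (-1) (w - v)
    rw [neg_one_smul, neg_sub] at h
    simpa using h
  intro u hu
  set a := Nstar (ξ - ζ) with ha
  set b := N (x - zp) with hbdef
  have hb0 : 0 ≤ b := hN0 _
  -- pieces
  have h1 := hVIp' u hu
  have h2 := hVIx' zp hzp
  have h3 := hVIp' x hx
  have s1 := hΦsc zp hzpK x hxK
  have s2 := hΦsc x hxK z hzK
  have s3 := hΦsc x hxK zp hzpK
  rw [hsym zp x] at s1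
  have d1 : ⟪ξ - ζ, zp - x⟫_ℝ ≤ a * b := by
    have h := aux_duality hN0 hNzero hNtri hNsmul hNstar (ξ - ζ) (zp - x)
    rwa [hsym zp x] at h
  -- key bound : α b² ≤ γ a b
  have hab : α * b ^ 2 ≤ γ * (a * b) := by
    have hd1γ := mul_le_mul_of_nonneg_left d1 hγ.le
    simp only [inner_sub_left, inner_sub_right] at h2 h3 hd1γ s1 s3 ⊢
    linarith [h2, h3, s1, s3, hd1γ]
  have hkey : γ * (a * b) ≤ γ ^ 2 / α * a ^ 2 := by
    rcases eq_or_lt_of_le hb0 with hb | hb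
    · rw [← hb]
      simp only [mul_zero, zero_mul]
      positivity
    · have hba : α * b ≤ γ * a := by nlinarith [hab, hb]
      have hga : 0 < γ * a := lt_of_lt_of_le (by positivity) hba
      have heq : γ ^ 2 / α * a ^ 2 = γ ^ 2 * a ^ 2 / α := by ring
      rw [heq, le_div_iff₀ hα]
      nlinarith [mul_le_mul_of_nonneg_left hba hga.le]
  -- final assembly
  simp only [hB, inner_sub_left, inner_sub_right] at h1 h2 s1 s2 d1 ⊢
  have hd1γ := mul_le_mul_of_nonneg_left d1 hγ.le
  linarith [h1, h2, s1, s2, hd1γ, hkey]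
end
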